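/- arXiv:1206.3591 — 2 statements merged into one kernel-verified Lean document; each statement's English description precedes it below -/
import Mathlib

section
/- For all n ≥ c+1 ≥ 2 and all k, the graphical Stirling numbers of forests satisfy S(F^{c+1}_{n+1}, k) = S(F^c_{n+1}, k) + S(F^c_n, k), where F^c_n denotes any forest with n vertices and c components. -/
open Finset SimpleGraph Polynomial

/-- Stirling numbers of the second kind. -/
def stirling2 : ℕ → ℕ → ℕ
  | 0, 0 => 1
  | 0, _ + 1 => 0
  | _ + 1, 0 => 0
  | n + 1, k + 1 => (k + 1) * stirling2 n (k + 1) + stirling2 n k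

/-- Bell numbers. -/
def bell (n : ℕ) : ℕ := ∑ k ∈ Finset.range (n + 1), stirling2 n k

/-- `graphStirling G k` is the number of partitions of the vertex set of `G`
into exactly `k` non-empty independent sets. -/
noncomputable def graphStirling {V : Type} [Fintype V] [DecidableEq V] (G : SimpleGraph V) (k : ℕ) : ℕ :=
  Nat.card {P : Finpartition (Finset.univ : Finset V) //
    P.parts.card = k ∧ ∀ p ∈ P.parts, ∀ u ∈ p, ∀ v ∈ p, ¬ G.Adj u v}

/-- The number of proper colorings of `G` with `x` colors
(the chromatic polynomial evaluated at `x`). -/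
noncomputable def chromaticCount {V : Type} [Fintype V] (G : SimpleGraph V) (x : ℕ) : ℕ :=
  Nat.card {f : V → Fin x // ∀ u v, G.Adj u v → f u ≠ f v}


set_option linter.unusedSectionVars false
set_option linter.unusedVariables false


def gs : ℕ → ℕ → ℕ → ℕ
  | 0, _, k => if k = 0 then 1 else 0
  | _+1, _, 0 => 0
  | n+1, c, k+1 => if c = n+1 then gs n n k + (k+1) * gs n n (k+1)
                   else gs n c k + k * gs n c (k+1)

lemma gs_zero (c k) : gs 0 c k = if k = 0 then 1 else 0 := rfl
lemma gs_succ_zero (n c) : gs (n+1) c 0 = 0 := rfl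
lemma gs_iso (n c k) (h : c = n+1) : gs (n+1) c (k+1) = gs n n k + (k+1) * gs n n (k+1) := by
  simp [gs, h]
lemma gs_leaf (n c k) (h : c ≠ n+1) : gs (n+1) c (k+1) = gs n c k + k * gs n c (k+1) := by
  simp [gs, h]

lemma gs_pos_zero (n c : ℕ) (hc : 1 ≤ n) : gs n c 0 = 0 := by
  match n, hc with
  | (n+1), _ => rfl

lemma gs_base (c : ℕ) (hc : 1 ≤ c) : ∀ k, gs (c+2) (c+1) k = gs (c+2) c k + gs (c+1) c k
  | 0 => by simp [gs_succ_zero]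
  | 1 => by
      rw [gs_leaf (c+1) (c+1) 0 (by omega), gs_leaf (c+1) c 0 (by omega),
        gs_leaf c c 0 (by omega), gs_iso c (c+1) 0 rfl]
      simp [gs_succ_zero, gs_pos_zero c c hc]
  | (k+2) => by
      rw [gs_leaf (c+1) (c+1) (k+1) (by omega), gs_iso c (c+1) k rfl, gs_iso c (c+1) (k+1) rfl,
        gs_leaf (c+1) c (k+1) (by omega), gs_leaf c c k (by omega), gs_leaf c c (k+1) (by omega)]
      ring

lemma gs_pascal (n c k : ℕ) (hc : 1 ≤ c) (hn : c + 1 ≤ n) :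
    gs (n+1) (c+1) k = gs (n+1) c k + gs n c k := by
  induction n, hn using Nat.le_induction generalizing k with
  | base => exact gs_base c hc k
  | succ n hn ih =>
      match k with
      | 0 => simp [gs_succ_zero]
      | (k+1) =>
          rw [gs_leaf (n+1) (c+1) k (by omega), ih k, ih (k+1),
            gs_leaf (n+1) c k (by omega), gs_leaf n c k (by omega)]
          ring



variable {V : Type} {G : SimpleGraph V} {v : V}

/-- The graph obtained by deleting the vertex `v`. -/
def delV (G : SimpleGraph V) (v : V) : SimpleGraph {u : V // u ≠ v} :=
  G.comap (fun u => (u : V))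

lemma delV_adj {a b : {u : V // u ≠ v}} : (delV G v).Adj a b ↔ G.Adj a b := Iff.rfl

lemma delV_acyclic (h : G.IsAcyclic) : (delV G v).IsAcyclic := by
  intro a c hc
  let f : delV G v →g G := ⟨fun u => (u : V), fun h => h⟩
  exact h (c.map f) (Walk.IsCycle.map (f := f) (fun _ _ hab => Subtype.ext hab) hc)

lemma reachable_delV {a b : V} (p : G.Walk a b) (hp : v ∉ p.support)
    (ha : a ≠ v) (hb : b ≠ v) : (delV G v).Reachable ⟨a, ha⟩ ⟨b, hb⟩ := by
  induction p with
  | nil => exact Reachable.refl _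
  | @cons x y z h q ih =>
      rw [SimpleGraph.Walk.support_cons, List.mem_cons] at hp
      push_neg at hp
      have hy : y ≠ v := fun hyv => hp.2 (hyv ▸ q.start_mem_support)
      exact (SimpleGraph.Adj.reachable (show (delV G v).Adj ⟨x, ha⟩ ⟨y, hy⟩ from h)).trans
        (ih hp.2 hy hb)

lemma reachable_of_delV {a b : {u : V // u ≠ v}} (h : (delV G v).Reachable a b) :
    G.Reachable (a : V) (b : V) :=
  Reachable.map (G := delV G v) (G' := G) ⟨fun u => (u : V), fun h => h⟩ h

/-- In a graph with no edges, any walk is constant. -/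
lemma walk_noedge {a b : V} (h : ∀ x y, ¬ G.Adj x y) (p : G.Walk a b) : a = b := by
  cases p with
  | nil => rfl
  | cons h' q => exact absurd h' (h _ _)

lemma comp_card_of_noedge [Fintype V] (h : ∀ x y, ¬ G.Adj x y) :
    Nat.card G.ConnectedComponent = Fintype.card V := by
  rw [← Nat.card_eq_fintype_card]
  exact (Nat.card_eq_of_bijective G.connectedComponentMk
    ⟨fun a b hab => walk_noedge h (ConnectedComponent.exact hab).some,
      Quot.mk_surjective⟩).symm

lemma noedge_of_comp_card [Fintype V] (h : Nat.card G.ConnectedComponent = Fintype.card V) :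
    ∀ x y, ¬ G.Adj x y := by
  classical
  have : Fintype G.ConnectedComponent := Fintype.ofFinite _
  have hsurj : Function.Surjective G.connectedComponentMk := Quot.mk_surjective
  have hcard : Fintype.card V = Fintype.card G.ConnectedComponent := by
    rw [← Nat.card_eq_fintype_card, ← Nat.card_eq_fintype_card (α := G.ConnectedComponent), h,
      Nat.card_eq_fintype_card]
  have hbij : Function.Bijective G.connectedComponentMk :=
    (Fintype.bijective_iff_surjective_and_card _).mpr ⟨hsurj, hcard⟩
  intro x y hxy
  exact G.irrefl (hbij.1 (ConnectedComponent.sound hxy.reachable) ▸ hxy)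

/-- Walk from an isolated vertex is trivial. -/
lemma walk_from_isolated {b : V} (h : ∀ w, ¬ G.Adj v w) (p : G.Walk v b) : b = v := by
  cases p with
  | nil => rfl
  | cons h' q => exact absurd h' (h _)

lemma walk_avoids_isolated {a b : V} (h : ∀ w, ¬ G.Adj v w) (p : G.Walk a b) (ha : a ≠ v) :
    v ∉ p.support := by
  induction p with
  | nil => simpa using ha.symm
  | @cons x y z h' q ih =>
      rw [SimpleGraph.Walk.support_cons, List.mem_cons]
      push_neg
      have hy : y ≠ v := fun hyv => h x (G.adj_symm (hyv ▸ h'))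
      exact ⟨ha.symm, ih hy⟩

lemma comp_card_isolated (h : ∀ w, ¬ G.Adj v w) [Fintype V] :
    Nat.card G.ConnectedComponent = Nat.card (delV G v).ConnectedComponent + 1 := by
  classical
  rw [← Finite.card_option]
  refine Nat.card_eq_of_bijective
    (ConnectedComponent.lift
      (fun w => if hw : w = v then none else some ((delV G v).connectedComponentMk ⟨w, hw⟩))
      ?_) ⟨?_, ?_⟩
  · intro a b p _
    by_cases ha : a = v
    · subst ha
      have := walk_from_isolated h p
      subst this
      rfl
    · have hb : b ≠ v := by
        rintro rfl
        exact ha (walk_from_isolated h p.reverse)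
      have hv : v ∉ p.support := walk_avoids_isolated h p ha
      simp only [dif_neg ha, dif_neg hb]
      exact congrArg some (ConnectedComponent.sound (reachable_delV p hv ha hb))
  · intro x y
    induction x using ConnectedComponent.ind with | _ a =>
    induction y using ConnectedComponent.ind with | _ b =>
    intro hab
    simp only [ConnectedComponent.lift_mk] at hab
    by_cases ha : a = v <;> by_cases hb : b = v
    · subst ha; subst hb; rfl
    · rw [dif_pos ha, dif_neg hb] at hab; exact absurd hab (by simp)
    · rw [dif_neg ha, dif_pos hb] at hab; exact absurd hab (by simp)
    · rw [dif_neg ha, dif_neg hb, Option.some_inj] at hab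
      exact ConnectedComponent.sound (reachable_of_delV (ConnectedComponent.exact hab))
  · intro x
    cases x with
    | none => exact ⟨G.connectedComponentMk v, by simp⟩
    | some Q =>
        induction Q using ConnectedComponent.ind with | _ w =>
        exact ⟨G.connectedComponentMk (w : V), by simp [w.2]⟩

lemma second_vertex {a b u : V} (p : G.Walk a b) (hab : a ≠ b) (hu : ∀ w, G.Adj a w → w = u) :
    u ∈ p.support.tail := by
  cases p with
  | nil => exact absurd rfl hab
  | cons h q =>
      rw [SimpleGraph.Walk.support_cons, List.tail_cons, ← hu _ h]
      exact q.start_mem_support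

lemma reachable_delV_leaf [DecidableEq V] {u : V} (hadj : G.Adj v u) (huniq : ∀ w, G.Adj v w → w = u)
    {a b : V} (ha : a ≠ v) (hb : b ≠ v) (h : G.Reachable a b) :
    (delV G v).Reachable ⟨a, ha⟩ ⟨b, hb⟩ := by
  obtain ⟨q⟩ := h
  set p : G.Walk a b := (q.toPath : G.Walk a b) with hpdef
  have hp : p.IsPath := q.toPath.2
  by_cases hv : v ∈ p.support
  · exfalso
    have h1 : u ∈ (p.takeUntil v hv).support := by
      have h1' := second_vertex ((p.takeUntil v hv).reverse) (fun hva => ha hva.symm) huniq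
      have := List.mem_of_mem_tail h1'
      rwa [SimpleGraph.Walk.support_reverse, List.mem_reverse] at this
    have h2 : u ∈ (p.dropUntil v hv).support.tail :=
      second_vertex _ (fun hvb => hb hvb.symm) huniq
    have hnd : p.support.Nodup := hp.support_nodup
    rw [← SimpleGraph.Walk.take_spec p hv, SimpleGraph.Walk.support_append,
      List.nodup_append] at hnd
    exact hnd.2.2 u h1 u h2 rfl
  · exact reachable_delV p hv ha hb

lemma comp_card_leaf [Fintype V] [DecidableEq V] {u : V} (hadj : G.Adj v u) (huniq : ∀ w, G.Adj v w → w = u) :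
    Nat.card (delV G v).ConnectedComponent = Nat.card G.ConnectedComponent := by
  classical
  have hu : u ≠ v := (G.ne_of_adj hadj).symm
  refine (Nat.card_eq_of_bijective
    (ConnectedComponent.lift
      (fun w => if hw : w = v then (delV G v).connectedComponentMk ⟨u, hu⟩
        else (delV G v).connectedComponentMk ⟨w, hw⟩)
      ?_) ⟨?_, ?_⟩).symm
  · intro a b p _
    have key : ∀ (x y : V) (hx : x ≠ v) (hy : y ≠ v), G.Reachable x y →
        (delV G v).connectedComponentMk ⟨x, hx⟩ = (delV G v).connectedComponentMk ⟨y, hy⟩ :=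
      fun x y hx hy hr => ConnectedComponent.sound (reachable_delV_leaf hadj huniq hx hy hr)
    by_cases ha : a = v <;> by_cases hb : b = v
    · subst ha; subst hb; rfl
    · subst ha
      simp only [dif_pos rfl, dif_neg hb]
      exact key u b hu hb ((hadj.symm.reachable).trans p.reachable)
    · subst hb
      simp only [dif_pos rfl, dif_neg ha]
      exact key a u ha hu (p.reachable.trans hadj.reachable)
    · simp only [dif_neg ha, dif_neg hb]
      exact key a b ha hb p.reachable
  · intro x y
    induction x using ConnectedComponent.ind with | _ a =>
    induction y using ConnectedComponent.ind with | _ b =>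
    intro hab
    simp only [ConnectedComponent.lift_mk] at hab
    by_cases ha : a = v <;> by_cases hb : b = v
    · subst ha; subst hb; rfl
    · subst ha
      simp only [dif_pos rfl, dif_neg hb] at hab
      have := reachable_of_delV (ConnectedComponent.exact hab)
      exact ConnectedComponent.sound (hadj.reachable.trans this)
    · subst hb
      simp only [dif_pos rfl, dif_neg ha] at hab
      have := reachable_of_delV (ConnectedComponent.exact hab)
      exact ConnectedComponent.sound (this.trans hadj.symm.reachable)
    · simp only [dif_neg ha, dif_neg hb] at hab
      exact ConnectedComponent.sound (reachable_of_delV (ConnectedComponent.exact hab))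
  · intro y
    induction y using ConnectedComponent.ind with | _ w =>
    refine ⟨G.connectedComponentMk (w : V), ?_⟩
    simp only [ConnectedComponent.lift_mk, dif_neg w.2]

lemma exists_leaf [Fintype V] [DecidableEq V] (hG : G.IsAcyclic) (hedge : ∃ x y, G.Adj x y) :
    ∃ a u, G.Adj a u ∧ ∀ w, G.Adj a w → w = u := by
  classical
  obtain ⟨x, y, hxy⟩ := hedge
  set P : ℕ → Prop := fun ℓ => ∃ (a b : V) (p : G.Walk a b), p.IsPath ∧ p.length = ℓ with hP
  have h1 : P 1 := ⟨x, y, (SimpleGraph.Path.singleton hxy : G.Path x y), (Path.singleton hxy).2,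
    by simp [SimpleGraph.Path.singleton]⟩
  have hbound : ∀ ℓ, P ℓ → ℓ ≤ Fintype.card V := by
    rintro ℓ ⟨a, b, p, hp, rfl⟩
    exact hp.length_lt.le
  set m := Nat.findGreatest P (Fintype.card V) with hm
  have hmP : P m := Nat.findGreatest_spec (hbound 1 h1) h1
  have hm1 : 1 ≤ m := Nat.le_findGreatest (hbound 1 h1) h1
  obtain ⟨a, b, p, hp, hlen⟩ := hmP
  cases p with
  | nil => simp at hlen; omega
  | @cons _ y' _ h q =>
      refine ⟨a, y', h, fun w hw => ?_⟩
      by_cases hws : w ∈ (SimpleGraph.Walk.cons h q).support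
      · have heq : ((SimpleGraph.Walk.cons h q).takeUntil w hws)
            = (SimpleGraph.Path.singleton hw : G.Walk a w) :=
          congrArg Subtype.val (hG.path_unique ⟨_, hp.takeUntil hws⟩ (Path.singleton hw))
        have h2 := SimpleGraph.Walk.take_spec (SimpleGraph.Walk.cons h q) hws
        rw [heq] at h2
        have h3 := congrArg (fun z => SimpleGraph.Walk.getVert z 1) h2
        simpa [SimpleGraph.Path.singleton] using h3
      · exfalso
        have hp' : (SimpleGraph.Walk.cons hw.symm (SimpleGraph.Walk.cons h q)).IsPath := by
          rw [SimpleGraph.Walk.cons_isPath_iff]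
          exact ⟨hp, hws⟩
        have hlen' : (SimpleGraph.Walk.cons hw.symm (SimpleGraph.Walk.cons h q)).length = m + 1 := by
          simp [hlen]
        have : P (m + 1) := ⟨w, b, _, hp', hlen'⟩
        exact Nat.findGreatest_is_greatest (lt_add_one m) (hbound _ this) this



variable {V : Type} [DecidableEq V] {v : V}

/-- The embedding of the subtype `{u // u ≠ v}` into `V`. -/
def embV (v : V) : {u : V // u ≠ v} ↪ V := Function.Embedding.subtype _

lemma embV_apply (a : {u : V // u ≠ v}) : embV v a = (a : V) := rfl

lemma v_not_mem_map (b : Finset {u : V // u ≠ v}) : v ∉ b.map (embV v) := by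
  simp only [Finset.mem_map, embV]
  rintro ⟨x, _, hx⟩
  exact x.2 hx

lemma map_subtype_of_not_mem {s : Finset V} (h : v ∉ s) :
    (s.subtype (· ≠ v)).map (embV v) = s := by
  rw [embV, Finset.subtype_map, Finset.filter_true_of_mem]
  exact fun x hx hxv => h (hxv ▸ hx)

lemma subtype_map_self (b : Finset {u : V // u ≠ v}) :
    (b.map (embV v)).subtype (· ≠ v) = b := by
  ext a
  rw [Finset.mem_subtype, show (a : V) = embV v a from rfl, Finset.mem_map']

section Fin
variable [Fintype V]

lemma univ_map_embV : (Finset.univ : Finset {u : V // u ≠ v}).map (embV v)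
    = (Finset.univ : Finset V) \ {v} := by
  ext x
  simp [embV, Finset.mem_sdiff]

/-- Push a finpartition of the subtype universe to a finpartition of `univ \ {v}`. -/
def toDel (Q : Finpartition (Finset.univ : Finset {u : V // u ≠ v})) :
    Finpartition ((Finset.univ : Finset V) \ {v}) where
  parts := Q.parts.image (Finset.map (embV v))
  supIndep := by
    rw [Finset.supIndep_iff_pairwiseDisjoint]
    rintro a ha b hb hne
    rw [Finset.mem_coe, Finset.mem_image] at ha hb
    obtain ⟨p, hp, rfl⟩ := ha
    obtain ⟨q, hq, rfl⟩ := hb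
    have hpq : p ≠ q := fun h => hne (h ▸ rfl)
    exact (Finset.disjoint_map _).mpr (Q.disjoint hp hq hpq)
  sup_parts := by
    rw [Finset.sup_image]
    ext x
    simp only [Finset.mem_sup, Function.comp, id, Finset.mem_map, Finset.mem_sdiff,
      Finset.mem_univ, true_and, Finset.mem_singleton]
    constructor
    · rintro ⟨p, _, a, _, rfl⟩
      exact a.2
    · intro hx
      have := Q.sup_parts
      have hmem : (⟨x, hx⟩ : {u : V // u ≠ v}) ∈ Q.parts.sup id := by
        rw [this]; exact Finset.mem_univ _
      rw [Finset.mem_sup] at hmem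
      obtain ⟨p, hp, hxp⟩ := hmem
      exact ⟨p, hp, ⟨x, hx⟩, hxp, rfl⟩
  bot_notMem := by
    rw [Finset.bot_eq_empty, Finset.mem_image]
    rintro ⟨p, hp, hpe⟩
    rw [Finset.map_eq_empty] at hpe
    exact Q.bot_notMem (by rwa [hpe] at hp)

lemma toDel_parts (Q : Finpartition (Finset.univ : Finset {u : V // u ≠ v})) :
    (toDel Q).parts = Q.parts.image (Finset.map (embV v)) := rfl

lemma v_not_mem_of_mem_toDel {Q : Finpartition (Finset.univ : Finset {u : V // u ≠ v})}
    {p : Finset V} (hp : p ∈ (toDel Q).parts) : v ∉ p := by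
  rw [toDel_parts, Finset.mem_image] at hp
  obtain ⟨q, _, rfl⟩ := hp
  exact v_not_mem_map q

/-- Pull a finpartition of `univ \ {v}` back to the subtype universe. -/
def ofDel (T : Finpartition ((Finset.univ : Finset V) \ {v})) :
    Finpartition (Finset.univ : Finset {u : V // u ≠ v}) where
  parts := T.parts.image (Finset.subtype (· ≠ v))
  supIndep := by
    rw [Finset.supIndep_iff_pairwiseDisjoint]
    rintro a ha b hb hne
    rw [Finset.mem_coe, Finset.mem_image] at ha hb
    obtain ⟨p, hp, rfl⟩ := ha
    obtain ⟨q, hq, rfl⟩ := hb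
    have hpq : p ≠ q := fun h => hne (h ▸ rfl)
    have hd := T.disjoint hp hq hpq
    simp only [Function.onFun, id_eq] at hd ⊢
    rw [Finset.disjoint_left] at hd ⊢
    intro a ha hb
    rw [Finset.mem_subtype] at ha hb
    exact hd ha hb
  sup_parts := by
    ext a
    simp only [Finset.sup_image, Finset.mem_sup, Function.comp, id, Finset.mem_subtype,
      Finset.mem_univ, iff_true]
    have hmem : (a : V) ∈ T.parts.sup id := by
      rw [T.sup_parts]
      simp [a.2]
    rw [Finset.mem_sup] at hmem
    exact hmem
  bot_notMem := by
    rw [Finset.bot_eq_empty, Finset.mem_image]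
    rintro ⟨t, ht, hte⟩
    obtain ⟨x, hx⟩ := Finset.nonempty_iff_ne_empty.mpr (T.ne_bot ht)
    have hxv : x ≠ v := by
      have := T.le ht hx
      rw [Finset.mem_sdiff, Finset.mem_singleton] at this
      exact this.2
    have : (⟨x, hxv⟩ : {u : V // u ≠ v}) ∈ t.subtype (· ≠ v) := by
      rw [Finset.mem_subtype]; exact hx
    rw [hte] at this
    exact absurd this (Finset.notMem_empty _)


lemma ofDel_parts (T : Finpartition ((Finset.univ : Finset V) \ {v})) :
    (ofDel T).parts = T.parts.image (Finset.subtype (· ≠ v)) := rfl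

lemma not_mem_v_of_mem_parts {T : Finpartition ((Finset.univ : Finset V) \ {v})}
    {t : Finset V} (ht : t ∈ T.parts) : v ∉ t := by
  intro hv
  have := T.le ht hv
  rw [Finset.mem_sdiff, Finset.mem_singleton] at this
  exact this.2 rfl

lemma toDel_ofDel (T : Finpartition ((Finset.univ : Finset V) \ {v})) :
    toDel (ofDel T) = T := by
  apply Finpartition.ext
  rw [toDel_parts, ofDel_parts, Finset.image_image]
  conv_rhs => rw [← Finset.image_id (s := T.parts)]
  apply Finset.image_congr
  intro t ht
  exact map_subtype_of_not_mem (not_mem_v_of_mem_parts ht)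

lemma ofDel_toDel (Q : Finpartition (Finset.univ : Finset {u : V // u ≠ v})) :
    ofDel (toDel Q) = Q := by
  apply Finpartition.ext
  rw [ofDel_parts, toDel_parts, Finset.image_image]
  conv_rhs => rw [← Finset.image_id (s := Q.parts)]
  apply Finset.image_congr
  intro q _
  exact subtype_map_self q

lemma card_toDel (Q : Finpartition (Finset.univ : Finset {u : V // u ≠ v})) :
    (toDel Q).parts.card = Q.parts.card := by
  rw [toDel_parts]
  exact Finset.card_image_of_injective _ (Finset.map_injective _)

lemma mem_toDel {Q : Finpartition (Finset.univ : Finset {u : V // u ≠ v})}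
    {q : Finset {u : V // u ≠ v}} (hq : q ∈ Q.parts) : q.map (embV v) ∈ (toDel Q).parts := by
  rw [toDel_parts]
  exact Finset.mem_image_of_mem _ hq

lemma mem_of_mem_toDel {Q : Finpartition (Finset.univ : Finset {u : V // u ≠ v})}
    {p : Finset V} (hp : p ∈ (toDel Q).parts) :
    ∃ q ∈ Q.parts, p = q.map (embV v) := by
  rw [toDel_parts, Finset.mem_image] at hp
  obtain ⟨q, hq, rfl⟩ := hp
  exact ⟨q, hq, rfl⟩

/-- Removing one of the parts of a finpartition. -/
lemma avoid_part {α : Type*} [DecidableEq α] {A : Finset α} (P : Finpartition A)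
    {b : Finset α} (hb : b ∈ P.parts) : (P.avoid b).parts = P.parts.erase b := by
  ext c
  rw [Finpartition.mem_avoid, Finset.mem_erase]
  constructor
  · rintro ⟨d, hd, hdb, rfl⟩
    have hne : d ≠ b := fun h => hdb (h ▸ le_refl b)
    have hdisj : Disjoint d b := P.disjoint hd hb hne
    rw [Finset.sdiff_eq_self_of_disjoint hdisj]
    exact ⟨hne, hd⟩
  · rintro ⟨hcb, hc⟩
    have hdisj := P.disjoint hc hb hcb
    refine ⟨c, hc, fun hle => ?_, Finset.sdiff_eq_self_of_disjoint hdisj⟩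
    exact P.ne_bot hc (le_bot_iff.mp (hdisj le_rfl hle))


lemma avoid_singleton {A : Finset V} {P : Finpartition A} {p₀ : Finset V}
    (hp₀ : p₀ ∈ P.parts) (hv : v ∈ p₀) (hne : p₀ ≠ {v}) :
    (P.avoid {v}).parts = insert (p₀.erase v) (P.parts.erase p₀) := by
  have huniq : ∀ d ∈ P.parts, d ≠ p₀ → v ∉ d := by
    intro d hd hdp hvd
    exact hdp (P.eq_of_mem_parts hd hp₀ hvd hv)
  have hp₀nesub : ¬ p₀ ≤ {v} := by
    intro hle
    rcases Finset.subset_singleton_iff.mp hle with h | h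
    · exact P.ne_bot hp₀ h
    · exact hne h
  ext c
  rw [Finpartition.mem_avoid, Finset.mem_insert, Finset.mem_erase]
  constructor
  · rintro ⟨d, hd, hdv, rfl⟩
    by_cases hdp : d = p₀
    · subst hdp
      left
      rw [← Finset.erase_eq]
    · right
      rw [Finset.sdiff_eq_self_of_disjoint (Finset.disjoint_singleton_right.mpr (huniq d hd hdp))]
      exact ⟨hdp, hd⟩
  · rintro (rfl | ⟨hcp, hc⟩)
    · exact ⟨p₀, hp₀, hp₀nesub, by rw [← Finset.erase_eq]⟩
    · have hvc : v ∉ c := huniq c hc hcp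
      refine ⟨c, hc, fun hle => ?_, Finset.sdiff_eq_self_of_disjoint
        (Finset.disjoint_singleton_right.mpr hvc)⟩
      rcases Finset.subset_singleton_iff.mp hle with h | h
      · exact P.ne_bot hc h
      · exact hvc (h ▸ Finset.mem_singleton_self v)

/-- Add `v` as a singleton part. -/
def insV (Q : Finpartition (Finset.univ : Finset {u : V // u ≠ v})) :
    Finpartition (Finset.univ : Finset V) :=
  (toDel Q).extend (b := {v}) (by simp) (by simp) (by simp)

lemma insV_parts (Q : Finpartition (Finset.univ : Finset {u : V // u ≠ v})) :
    (insV Q).parts = insert {v} (toDel Q).parts := rfl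

lemma insV_card (Q : Finpartition (Finset.univ : Finset {u : V // u ≠ v})) :
    (insV Q).parts.card = Q.parts.card + 1 := by
  rw [← card_toDel Q, insV, Finpartition.card_extend]

/-- Add `v` to the part corresponding to `b`. -/
def insB (Q : Finpartition (Finset.univ : Finset {u : V // u ≠ v}))
    (b : Finset {u : V // u ≠ v}) : Finpartition (Finset.univ : Finset V) :=
  ((toDel Q).avoid (b.map (embV v))).extend (b := insert v (b.map (embV v)))
    (by simp)
    (by
      rw [Finset.disjoint_right]
      intro x hx
      rw [Finset.mem_insert] at hx
      rw [Finset.mem_sdiff, Finset.mem_sdiff, Finset.mem_singleton]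
      rcases hx with rfl | hx
      · rintro ⟨⟨-, h⟩, -⟩; exact h rfl
      · rintro ⟨-, h⟩; exact h hx)
    (by
      ext x
      simp only [Finset.sup_eq_union, Finset.mem_union, Finset.mem_sdiff, Finset.mem_singleton,
        Finset.mem_insert, Finset.mem_univ, iff_true]
      by_cases hxv : x = v
      · right; left; exact hxv
      · by_cases hxb : x ∈ b.map (embV v)
        · right; right; exact hxb
        · left; exact ⟨⟨trivial, hxv⟩, hxb⟩)

lemma insB_parts (Q : Finpartition (Finset.univ : Finset {u : V // u ≠ v}))
    {b : Finset {u : V // u ≠ v}} (hb : b ∈ Q.parts) :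
    (insB Q b).parts
      = insert (insert v (b.map (embV v))) ((toDel Q).parts.erase (b.map (embV v))) := by
  rw [insB, Finpartition.extend_parts, avoid_part _ (mem_toDel hb)]

lemma insB_card (Q : Finpartition (Finset.univ : Finset {u : V // u ≠ v}))
    {b : Finset {u : V // u ≠ v}} (hb : b ∈ Q.parts) :
    (insB Q b).parts.card = Q.parts.card := by
  rw [insB, Finpartition.card_extend, avoid_part _ (mem_toDel hb),
    Finset.card_erase_of_mem (mem_toDel hb), card_toDel]
  have : 1 ≤ Q.parts.card := Finset.card_pos.mpr ⟨b, hb⟩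
  omega

section Key

variable {V : Type} [Fintype V] [DecidableEq V] (G : SimpleGraph V) (v : V)

lemma insV_indep {Q : Finpartition (Finset.univ : Finset {u : V // u ≠ v})}
    (hQ : ∀ p ∈ Q.parts, ∀ u ∈ p, ∀ w ∈ p, ¬ (delV G v).Adj u w) :
    ∀ p ∈ (insV Q).parts, ∀ u ∈ p, ∀ w ∈ p, ¬ G.Adj u w := by
  intro p hp u hu w hw
  rw [insV_parts, Finset.mem_insert] at hp
  rcases hp with rfl | hp
  · rw [Finset.mem_singleton] at hu hw
    subst hu; subst hw
    exact G.irrefl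
  · obtain ⟨q, hq, rfl⟩ := mem_of_mem_toDel hp
    rw [Finset.mem_map] at hu hw
    obtain ⟨u', hu', rfl⟩ := hu
    obtain ⟨w', hw', rfl⟩ := hw
    exact hQ q hq u' hu' w' hw'

lemma insB_indep {Q : Finpartition (Finset.univ : Finset {u : V // u ≠ v})}
    {b : Finset {u : V // u ≠ v}} (hb : b ∈ Q.parts)
    (hQ : ∀ p ∈ Q.parts, ∀ u ∈ p, ∀ w ∈ p, ¬ (delV G v).Adj u w)
    (hbv : ∀ u ∈ b, ¬ G.Adj v (u : V)) :
    ∀ p ∈ (insB Q b).parts, ∀ u ∈ p, ∀ w ∈ p, ¬ G.Adj u w := by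
  intro p hp u hu w hw
  rw [insB_parts _ hb, Finset.mem_insert] at hp
  rcases hp with rfl | hp
  · rw [Finset.mem_insert] at hu hw
    rcases hu with rfl | hu <;> rcases hw with rfl | hw
    · exact G.irrefl
    · rw [Finset.mem_map] at hw
      obtain ⟨w', hw', rfl⟩ := hw
      exact hbv w' hw'
    · rw [Finset.mem_map] at hu
      obtain ⟨u', hu', rfl⟩ := hu
      exact fun h => hbv u' hu' h.symm
    · rw [Finset.mem_map] at hu hw
      obtain ⟨u', hu', rfl⟩ := hu
      obtain ⟨w', hw', rfl⟩ := hw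
      exact hQ b hb u' hu' w' hw'
  · obtain ⟨q, hq, rfl⟩ := mem_of_mem_toDel (Finset.mem_of_mem_erase hp)
    rw [Finset.mem_map] at hu hw
    obtain ⟨u', hu', rfl⟩ := hu
    obtain ⟨w', hw', rfl⟩ := hw
    exact hQ q hq u' hu' w' hw'

lemma singleton_v_eq_insert_iff {b : Finset {u : V // u ≠ v}} (hbne : b.Nonempty) :
    insert v (b.map (embV v)) ≠ {v} := by
  intro h
  obtain ⟨x, hx⟩ := hbne
  have hmem : (x : V) ∈ insert v (b.map (embV v)) :=
    Finset.mem_insert_of_mem (Finset.mem_map_of_mem _ hx)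
  rw [h, Finset.mem_singleton] at hmem
  exact x.2 hmem

lemma key_count (k : ℕ) :
    graphStirling G (k+1)
      = graphStirling (delV G v) k
        + Nat.card (Σ Q : {Q : Finpartition (Finset.univ : Finset {u : V // u ≠ v}) //
              Q.parts.card = k + 1 ∧ ∀ p ∈ Q.parts, ∀ u ∈ p, ∀ w ∈ p, ¬ (delV G v).Adj u w},
            {b : Finset {u : V // u ≠ v} // b ∈ Q.1.parts ∧ ∀ u ∈ b, ¬ G.Adj v (u : V)}) := by
  classical
  rw [graphStirling, graphStirling, ← Nat.card_sum]
  refine (Nat.card_eq_of_bijective (fun d =>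
    match d with
    | Sum.inl ⟨Q, hQc, hQi⟩ => ⟨insV Q, by rw [insV_card, hQc], insV_indep G v hQi⟩
    | Sum.inr ⟨⟨Q, hQc, hQi⟩, ⟨b, hbm, hbv⟩⟩ =>
        ⟨insB Q b, by rw [insB_card _ hbm, hQc], insB_indep G v hbm hQi hbv⟩)
    ⟨?_, ?_⟩).symm
  · -- injectivity
    rintro (⟨Q₁, h₁c, h₁i⟩ | ⟨⟨Q₁, h₁c, h₁i⟩, ⟨b₁, hb₁, hv₁⟩⟩)
      (⟨Q₂, h₂c, h₂i⟩ | ⟨⟨Q₂, h₂c, h₂i⟩, ⟨b₂, hb₂, hv₂⟩⟩) hf <;>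
      simp only [Subtype.mk.injEq] at hf
    · -- inl inl
      have hparts := congrArg Finpartition.parts hf
      rw [insV_parts, insV_parts] at hparts
      have h1 : {v} ∉ (toDel Q₁).parts := fun h => v_not_mem_of_mem_toDel h (Finset.mem_singleton_self v)
      have h2 : {v} ∉ (toDel Q₂).parts := fun h => v_not_mem_of_mem_toDel h (Finset.mem_singleton_self v)
      have : (toDel Q₁).parts = (toDel Q₂).parts := by
        rw [← Finset.erase_insert h1, ← Finset.erase_insert h2, hparts]
      have hQ : Q₁ = Q₂ := by
        rw [← ofDel_toDel (v := v) Q₁, ← ofDel_toDel (v := v) Q₂, Finpartition.ext this]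
      subst hQ
      rfl
    · -- inl inr : impossible
      exfalso
      have hparts := congrArg Finpartition.parts hf
      rw [insV_parts, insB_parts _ hb₂] at hparts
      have hmem : ({v} : Finset V) ∈ insert (insert v (b₂.map (embV v)))
          ((toDel Q₂).parts.erase (b₂.map (embV v))) := by
        rw [← hparts]; exact Finset.mem_insert_self _ _
      rw [Finset.mem_insert] at hmem
      rcases hmem with h | h
      · exact singleton_v_eq_insert_iff v (Finset.nonempty_iff_ne_empty.mpr (Q₂.ne_bot hb₂)) h.symm
      · exact v_not_mem_of_mem_toDel (Finset.mem_of_mem_erase h) (Finset.mem_singleton_self v)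
    · -- inr inl : impossible
      exfalso
      have hparts := congrArg Finpartition.parts hf
      rw [insV_parts, insB_parts _ hb₁] at hparts
      have hmem : ({v} : Finset V) ∈ insert (insert v (b₁.map (embV v)))
          ((toDel Q₁).parts.erase (b₁.map (embV v))) := by
        rw [hparts]; exact Finset.mem_insert_self _ _
      rw [Finset.mem_insert] at hmem
      rcases hmem with h | h
      · exact singleton_v_eq_insert_iff v (Finset.nonempty_iff_ne_empty.mpr (Q₁.ne_bot hb₁)) h.symm
      · exact v_not_mem_of_mem_toDel (Finset.mem_of_mem_erase h) (Finset.mem_singleton_self v)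
    · -- inr inr
      have hparts := congrArg Finpartition.parts hf
      rw [insB_parts _ hb₁, insB_parts _ hb₂] at hparts
      set B₁ := b₁.map (embV v) with hB₁
      set B₂ := b₂.map (embV v) with hB₂
      have hvB : ∀ (Q : Finpartition (Finset.univ : Finset {u : V // u ≠ v})) (B : Finset V),
          insert v B ∉ (toDel Q).parts.erase B :=
        fun Q B h => v_not_mem_of_mem_toDel (Finset.mem_of_mem_erase h) (Finset.mem_insert_self v B)
      have hBeq : insert v B₁ = insert v B₂ := by
        have hmem : insert v B₂ ∈ insert (insert v B₁) ((toDel Q₁).parts.erase B₁) := by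
          rw [hparts]; exact Finset.mem_insert_self _ _
        rw [Finset.mem_insert] at hmem
        rcases hmem with h | h
        · exact h.symm
        · exact absurd (Finset.mem_insert_self v B₂)
            (v_not_mem_of_mem_toDel (Finset.mem_of_mem_erase h))
      have hbeq : b₁ = b₂ := by
        have h1 : v ∉ B₁ := v_not_mem_map b₁
        have h2 : v ∉ B₂ := v_not_mem_map b₂
        have : B₁ = B₂ := by
          rw [← Finset.erase_insert h1, ← Finset.erase_insert h2, hBeq]
        exact Finset.map_injective _ this
      subst hbeq
      have hS : (toDel Q₁).parts.erase B₁ = (toDel Q₂).parts.erase B₁ := by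
        rw [← Finset.erase_insert (hvB Q₁ B₁), ← Finset.erase_insert (hvB Q₂ B₁), hBeq, hparts]
      have hTparts : (toDel Q₁).parts = (toDel Q₂).parts := by
        rw [← Finset.insert_erase (mem_toDel hb₁), ← Finset.insert_erase (mem_toDel hb₂), hS]
      have hQ : Q₁ = Q₂ := by
        rw [← ofDel_toDel (v := v) Q₁, ← ofDel_toDel (v := v) Q₂, Finpartition.ext hTparts]
      subst hQ
      rfl
  · -- surjectivity
    rintro ⟨P, hPc, hPi⟩
    obtain ⟨p₀, hp₀, hvp₀⟩ := P.exists_mem (Finset.mem_univ v)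
    by_cases h0 : p₀ = {v}
    · subst h0
      set T : Finpartition ((Finset.univ : Finset V) \ {v}) := P.avoid {v} with hTdef
      have hT : T.parts = P.parts.erase {v} := avoid_part P hp₀
      set Q := ofDel T with hQdef
      have hTQ : toDel Q = T := toDel_ofDel T
      have hQc : Q.parts.card = k := by
        have := card_toDel Q
        rw [hTQ, hT, Finset.card_erase_of_mem hp₀, hPc] at this
        omega
      have hQi : ∀ p ∈ Q.parts, ∀ u ∈ p, ∀ w ∈ p, ¬ (delV G v).Adj u w := by
        intro q hq u hu w hw
        have hmem : q.map (embV v) ∈ T.parts := by rw [← hTQ]; exact mem_toDel hq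
        rw [hT] at hmem
        exact hPi _ (Finset.mem_of_mem_erase hmem) _ (Finset.mem_map_of_mem _ hu)
          _ (Finset.mem_map_of_mem _ hw)
      refine ⟨Sum.inl ⟨Q, hQc, hQi⟩, ?_⟩
      apply Subtype.ext
      apply Finpartition.ext
      show (insV Q).parts = P.parts
      rw [insV_parts, hTQ, hT, Finset.insert_erase hp₀]
    · set B₀ := p₀.erase v with hB₀
      have hB₀ne : B₀.Nonempty := by
        have hne : p₀.Nonempty := Finset.nonempty_iff_ne_empty.mpr (P.ne_bot hp₀)
        rcases Finset.eq_singleton_or_nontrivial hvp₀ with h | h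
        · exact absurd h h0
        · obtain ⟨x, hx, y, hy, hxy⟩ := h
          rcases eq_or_ne x v with rfl | hxv
          · exact ⟨y, Finset.mem_erase.mpr ⟨fun h => hxy h.symm, hy⟩⟩
          · exact ⟨x, Finset.mem_erase.mpr ⟨hxv, hx⟩⟩
      have hB₀notin : B₀ ∉ P.parts.erase p₀ := by
        intro hmem
        have hne : B₀ ≠ p₀ := (Finset.mem_erase.mp hmem).1
        have hdisj := P.disjoint (Finset.mem_of_mem_erase hmem) hp₀ hne
        have hsub : B₀ ⊆ p₀ := Finset.erase_subset _ _
        obtain ⟨x, hx⟩ := hB₀ne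
        exact Finset.disjoint_left.mp hdisj hx (hsub hx)
      set T : Finpartition ((Finset.univ : Finset V) \ {v}) := P.avoid {v} with hTdef
      have hT : T.parts = insert B₀ (P.parts.erase p₀) := avoid_singleton hp₀ hvp₀ h0
      set Q := ofDel T with hQdef
      have hTQ : toDel Q = T := toDel_ofDel T
      have hQc : Q.parts.card = k + 1 := by
        have := card_toDel Q
        rw [hTQ, hT, Finset.card_insert_of_notMem hB₀notin,
          Finset.card_erase_of_mem hp₀, hPc] at this
        omega
      have hTsub : ∀ t ∈ T.parts, t ⊆ p₀ ∨ t ∈ P.parts := by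
        intro t ht
        rw [hT, Finset.mem_insert] at ht
        rcases ht with rfl | ht
        · exact Or.inl (Finset.erase_subset _ _)
        · exact Or.inr (Finset.mem_of_mem_erase ht)
      have hQi : ∀ p ∈ Q.parts, ∀ u ∈ p, ∀ w ∈ p, ¬ (delV G v).Adj u w := by
        intro q hq u hu w hw
        have hmem : q.map (embV v) ∈ T.parts := by rw [← hTQ]; exact mem_toDel hq
        rcases hTsub _ hmem with h | h
        · exact hPi p₀ hp₀ _ (h (Finset.mem_map_of_mem _ hu)) _ (h (Finset.mem_map_of_mem _ hw))
        · exact hPi _ h _ (Finset.mem_map_of_mem _ hu) _ (Finset.mem_map_of_mem _ hw)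
      have hvB₀ : v ∉ B₀ := Finset.notMem_erase _ _
      set b : Finset {u : V // u ≠ v} := B₀.subtype (· ≠ v) with hbdef
      have hbB₀ : b.map (embV v) = B₀ := map_subtype_of_not_mem hvB₀
      have hbm : b ∈ Q.parts := by
        rw [hQdef, ofDel_parts]
        apply Finset.mem_image_of_mem
        rw [hT]
        exact Finset.mem_insert_self _ _
      have hbv : ∀ u ∈ b, ¬ G.Adj v (u : V) := by
        intro u hu
        rw [hbdef, Finset.mem_subtype] at hu
        exact hPi p₀ hp₀ v hvp₀ _ (Finset.mem_of_mem_erase hu)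
      refine ⟨Sum.inr ⟨⟨Q, hQc, hQi⟩, ⟨b, hbm, hbv⟩⟩, ?_⟩
      apply Subtype.ext
      apply Finpartition.ext
      show (insB Q b).parts = P.parts
      rw [insB_parts _ hbm, hbB₀, hTQ, hT, Finset.erase_insert hB₀notin,
        Finset.insert_erase hvp₀, Finset.insert_erase hp₀]

lemma nat_card_mem_finset {α : Type*} (s : Finset α) : Nat.card {x // x ∈ s} = s.card := by
  rw [Nat.card_eq_fintype_card, Fintype.card_coe]

lemma nat_card_sigma_const {ι : Type} [Finite ι] (f : ι → Type) [∀ i, Finite (f i)] (m : ℕ)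
    (h : ∀ i, Nat.card (f i) = m) : Nat.card (Σ i, f i) = Nat.card ι * m := by
  classical
  cases nonempty_fintype ι
  haveI : ∀ i, Fintype (f i) := fun i => Fintype.ofFinite _
  rw [Nat.card_eq_fintype_card, Fintype.card_sigma, Nat.card_eq_fintype_card]
  have : ∀ i, Fintype.card (f i) = m := fun i => by
    rw [← Nat.card_eq_fintype_card, h]
  simp [this, Finset.sum_const, Finset.card_univ]

lemma key_isolated (hv : ∀ w, ¬ G.Adj v w) (k : ℕ) :
    graphStirling G (k+1)
      = graphStirling (delV G v) k + (k+1) * graphStirling (delV G v) (k+1) := by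
  classical
  rw [key_count G v k]
  congr 1
  rw [nat_card_sigma_const _ (k+1) (fun Q => ?_), graphStirling, mul_comm]
  have e : {b : Finset {u : V // u ≠ v} // b ∈ Q.1.parts ∧ ∀ u ∈ b, ¬ G.Adj v (u : V)}
      ≃ {b // b ∈ Q.1.parts} :=
    Equiv.subtypeEquivRight (fun b => by simp only [and_iff_left_iff_imp]; exact fun _ u _ => hv u)
  rw [Nat.card_congr e, nat_card_mem_finset, Q.2.1]

lemma key_leaf {u₀ : V} (hadj : G.Adj v u₀) (huniq : ∀ w, G.Adj v w → w = u₀) (k : ℕ) :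
    graphStirling G (k+1)
      = graphStirling (delV G v) k + k * graphStirling (delV G v) (k+1) := by
  classical
  rw [key_count G v k]
  congr 1
  rw [nat_card_sigma_const _ k (fun Q => ?_), graphStirling, mul_comm]
  have hu : u₀ ≠ v := (G.ne_of_adj hadj).symm
  set u' : {u : V // u ≠ v} := ⟨u₀, hu⟩ with hu'
  obtain ⟨q₀, hq₀, hu'q₀⟩ := Q.1.exists_mem (Finset.mem_univ u')
  have e : {b : Finset {u : V // u ≠ v} // b ∈ Q.1.parts ∧ ∀ u ∈ b, ¬ G.Adj v (u : V)}
      ≃ {b // b ∈ Q.1.parts.erase q₀} := by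
    refine Equiv.subtypeEquivRight (fun b => ?_)
    rw [Finset.mem_erase]
    constructor
    · rintro ⟨hb, hcond⟩
      exact ⟨fun hbq => hcond u' (hbq ▸ hu'q₀) hadj, hb⟩
    · rintro ⟨hbq, hb⟩
      refine ⟨hb, fun u hu hadj' => ?_⟩
      have hequ : u = u' := Subtype.ext (huniq _ hadj')
      subst hequ
      exact hbq (Q.1.eq_of_mem_parts hb hq₀ hu hu'q₀)
  rw [Nat.card_congr e, nat_card_mem_finset, Finset.card_erase_of_mem hq₀, Q.2.1]
  omega

lemma stirling_zero (hne : Nonempty V) : graphStirling G 0 = 0 := by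
  have : IsEmpty {P : Finpartition (Finset.univ : Finset V) //
      P.parts.card = 0 ∧ ∀ p ∈ P.parts, ∀ u ∈ p, ∀ w ∈ p, ¬ G.Adj u w} := by
    refine ⟨fun ⟨P, h0, _⟩ => ?_⟩
    rw [Finset.card_eq_zero] at h0
    have huniv := Finpartition.parts_eq_empty_iff.mp h0
    exact (Finset.univ_nonempty).ne_empty huniv
  exact Nat.card_of_isEmpty

end Key

lemma forest_gs : ∀ (n : ℕ) (V : Type) [Fintype V] [DecidableEq V] (G : SimpleGraph V),
    G.IsAcyclic → Fintype.card V = n →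
    ∀ k, graphStirling G k = gs n (Nat.card G.ConnectedComponent) k := by
  intro n
  induction n with
  | zero =>
      intro V _ _ G _ hcard k
      haveI : IsEmpty V := Fintype.card_eq_zero_iff.mp hcard
      have huniv : (Finset.univ : Finset V) = ⊥ := by simp
      rw [gs_zero]
      by_cases hk : k = 0
      · subst hk
        rw [if_pos rfl]
        haveI hsub : Subsingleton {P : Finpartition (Finset.univ : Finset V) //
            P.parts.card = 0 ∧ ∀ p ∈ P.parts, ∀ u ∈ p, ∀ w ∈ p, ¬ G.Adj u w} := by
          constructor
          rintro ⟨P₁, -, -⟩ ⟨P₂, -, -⟩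
          apply Subtype.ext
          apply Finpartition.ext
          rw [Finpartition.parts_eq_empty_iff.mpr huniv, Finpartition.parts_eq_empty_iff.mpr huniv]
        haveI hne : Nonempty {P : Finpartition (Finset.univ : Finset V) //
            P.parts.card = 0 ∧ ∀ p ∈ P.parts, ∀ u ∈ p, ∀ w ∈ p, ¬ G.Adj u w} := by
          refine ⟨⟨⟨∅, by simp, by simp [huniv], by simp⟩, by simp, by simp⟩⟩
        exact Nat.card_unique
      · rw [if_neg hk]
        have : IsEmpty {P : Finpartition (Finset.univ : Finset V) //
            P.parts.card = k ∧ ∀ p ∈ P.parts, ∀ u ∈ p, ∀ w ∈ p, ¬ G.Adj u w} := by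
          refine ⟨fun ⟨P, h0, _⟩ => ?_⟩
          rw [Finpartition.parts_eq_empty_iff.mpr huniv] at h0
          simp at h0
          exact hk h0.symm
        exact Nat.card_of_isEmpty
  | succ n ih =>
      intro V _ _ G hG hcard k
      haveI hne : Nonempty V := Fintype.card_pos_iff.mp (by omega)
      by_cases hcn : Nat.card G.ConnectedComponent = n + 1
      · have hnoedge : ∀ x y, ¬ G.Adj x y := noedge_of_comp_card (by rw [hcn, hcard])
        have v : V := Classical.choice hne
        have hv : ∀ w, ¬ G.Adj v w := fun w => hnoedge v w
        have hcard' : Fintype.card {u : V // u ≠ v} = n := by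
          have h1 : Fintype.card {u : V // ¬ u = v} = Fintype.card V - Fintype.card {u : V // u = v} :=
            Fintype.card_subtype_compl _
          rw [Fintype.card_subtype_eq, hcard] at h1
          simpa using h1
        have hcomp := comp_card_isolated hv
        have hcomp' : Nat.card (delV G v).ConnectedComponent = n := by omega
        cases k with
        | zero => rw [stirling_zero G hne, gs_succ_zero]
        | succ k =>
            rw [key_isolated G v hv k,
              ih _ (delV G v) (delV_acyclic hG) hcard' k,
              ih _ (delV G v) (delV_acyclic hG) hcard' (k+1),
              hcomp', gs_iso n _ k hcn]
      · have hedge : ∃ x y, G.Adj x y := by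
          by_contra h
          push_neg at h
          exact hcn (by rw [comp_card_of_noedge h, hcard])
        obtain ⟨v, u, hadj, huniq⟩ := exists_leaf hG hedge
        have hcard' : Fintype.card {u' : V // u' ≠ v} = n := by
          have h1 : Fintype.card {u' : V // ¬ u' = v} = Fintype.card V - Fintype.card {u' : V // u' = v} :=
            Fintype.card_subtype_compl _
          rw [Fintype.card_subtype_eq, hcard] at h1
          simpa using h1
        have hcomp' : Nat.card (delV G v).ConnectedComponent = Nat.card G.ConnectedComponent :=
          comp_card_leaf hadj huniq
        cases k with
        | zero => rw [stirling_zero G hne, gs_succ_zero]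
        | succ k =>
            rw [key_leaf G v hadj huniq k,
              ih _ (delV G v) (delV_acyclic hG) hcard' k,
              ih _ (delV G v) (delV_acyclic hG) hcard' (k+1),
              hcomp', gs_leaf n _ k hcn]

theorem forest_graphStirling_pascal
    {V₁ V₂ V₃ : Type} [Fintype V₁] [DecidableEq V₁] [Fintype V₂] [DecidableEq V₂]
    [Fintype V₃] [DecidableEq V₃]
    (G₁ : SimpleGraph V₁) (G₂ : SimpleGraph V₂) (G₃ : SimpleGraph V₃)
    (h₁ : G₁.IsAcyclic) (h₂ : G₂.IsAcyclic) (h₃ : G₃.IsAcyclic)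
    (n c : ℕ) (hc : 1 ≤ c) (hn : c + 1 ≤ n)
    (hn₁ : Fintype.card V₁ = n + 1) (hc₁ : Nat.card G₁.ConnectedComponent = c + 1)
    (hn₂ : Fintype.card V₂ = n + 1) (hc₂ : Nat.card G₂.ConnectedComponent = c)
    (hn₃ : Fintype.card V₃ = n) (hc₃ : Nat.card G₃.ConnectedComponent = c)
    (k : ℕ) :
    graphStirling G₁ k = graphStirling G₂ k + graphStirling G₃ k := by
  rw [forest_gs (n+1) V₁ G₁ h₁ hn₁ k, forest_gs (n+1) V₂ G₂ h₂ hn₂ k,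
    forest_gs n V₃ G₃ h₃ hn₃ k, hc₁, hc₂, hc₃]
  exact gs_pascal n c k hc hn
end Fin
end

section
/- For all n ≥ 4 and all k, the number of partitions of the vertex set of the n-cycle C_n into k non-empty independent sets satisfies S(C_n, k) = S(n-1, k-1) - S(C_{n-1}, k), with S(C_3, 3) = 1 and S(C_3, k) = 0 for k ≠ 3. -/
open Finset SimpleGraph Polynomial

lemma stirling2_eq_zero : ∀ {m k : ℕ}, m < k → stirling2 m k = 0 := by
  intro m
  induction m with
  | zero => intro k hk; match k, hk with | k+1, _ => rfl
  | succ n ih =>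
    intro k hk
    match k, hk with
    | k+1, hk =>
      show (k + 1) * stirling2 n (k + 1) + stirling2 n k = 0
      rw [ih (by omega), ih (by omega)]; ring

lemma mul_descFactorial (y j : ℕ) :
    y * y.descFactorial j = y.descFactorial (j+1) + j * y.descFactorial j := by
  rcases le_or_gt j y with h | h
  · rw [Nat.descFactorial_succ, ← Nat.add_mul, Nat.sub_add_cancel h]
  · rw [Nat.descFactorial_eq_zero_iff_lt.2 h,
      Nat.descFactorial_eq_zero_iff_lt.2 (by omega)]
    ring

/-- Stirling sum identity. -/
lemma stirling2_sum (m y : ℕ) :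
    ∑ j ∈ range (m + 1), stirling2 m j * y.descFactorial j = y ^ m := by
  induction m with
  | zero => simp [stirling2]
  | succ n ih =>
    rw [Finset.sum_range_succ']
    have h1 : ∀ j ∈ range (n+1), stirling2 (n+1) (j+1) * y.descFactorial (j+1)
        = (j+1) * stirling2 n (j+1) * y.descFactorial (j+1)
          + stirling2 n j * y.descFactorial (j+1) := by
      intro j _
      show ((j + 1) * stirling2 n (j + 1) + stirling2 n j) * _ = _
      ring
    rw [Finset.sum_congr rfl h1, Finset.sum_add_distrib]
    have h2 : ∑ j ∈ range (n+1), (j+1) * stirling2 n (j+1) * y.descFactorial (j+1)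
        = ∑ j ∈ range (n+1), j * stirling2 n j * y.descFactorial j := by
      rw [Finset.sum_range_succ' (fun j => j * stirling2 n j * y.descFactorial j)]
      rw [Finset.sum_range_succ]
      rw [stirling2_eq_zero (Nat.lt_succ_self n)]
      ring
    rw [h2]
    have h3 : stirling2 (n+1) 0 = 0 := rfl
    rw [h3]
    have h4 : y ^ (n+1) = ∑ j ∈ range (n+1), stirling2 n j * (y * y.descFactorial j) := by
      calc y ^ (n+1) = (∑ j ∈ range (n+1), stirling2 n j * y.descFactorial j) * y := by
            rw [ih]; ring
        _ = ∑ j ∈ range (n+1), stirling2 n j * (y * y.descFactorial j) := by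
            rw [Finset.sum_mul]; apply Finset.sum_congr rfl; intros; ring
    rw [h4]
    have h5 : ∀ j ∈ range (n+1), stirling2 n j * (y * y.descFactorial j)
        = stirling2 n j * y.descFactorial (j+1) + j * stirling2 n j * y.descFactorial j := by
      intro j _
      rw [mul_descFactorial]; ring
    rw [Finset.sum_congr rfl h5, Finset.sum_add_distrib]
    ring

/-- Linear independence of descending factorials. -/
lemma descFactorial_indep (N : ℕ) (c : ℕ → ℤ)
    (h : ∀ x : ℕ, ∑ k ∈ range N, c k * (x.descFactorial k : ℤ) = 0) :
    ∀ k, k < N → c k = 0 := by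
  intro k
  induction k using Nat.strong_induction_on with
  | _ k ih =>
    intro hkN
    have hx := h k
    have hsplit : ∀ j ∈ range N, j ≠ k → c j * ((k).descFactorial j : ℤ) = 0 := by
      intro j hj hjk
      rcases lt_or_gt_of_ne hjk with hlt | hgt
      · rw [ih j hlt (by omega)]; ring
      · rw [Nat.descFactorial_eq_zero_iff_lt.2 hgt]; simp
    rw [Finset.sum_eq_single_of_mem k (Finset.mem_range.2 hkN) hsplit] at hx
    have : (Nat.descFactorial k k : ℤ) ≠ 0 := by
      simp [Nat.descFactorial_self]
      positivity
    exact (mul_eq_zero.1 hx).resolve_right this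



lemma nat_card_sigma {ι : Type*} [Fintype ι] (f : ι → Type*) [∀ i, Finite (f i)] :
    Nat.card (Σ i, f i) = ∑ i, Nat.card (f i) := by
  classical
  letI : ∀ i, Fintype (f i) := fun i => Fintype.ofFinite _
  simp [Nat.card_eq_fintype_card]

lemma chromaticCount_zero {V : Type} [Fintype V] [Nonempty V] (G : SimpleGraph V) :
    chromaticCount G 0 = 0 := by
  rw [chromaticCount, Nat.card_eq_zero]
  left
  constructor
  rintro ⟨f, -⟩
  exact (f (Classical.arbitrary V)).elim0

lemma chromaticCount_pathGraph (n x : ℕ) :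
    chromaticCount (pathGraph (n+1)) x = x * (x-1)^n := by
  induction n with
  | zero =>
    have e : {f : Fin 1 → Fin x // ∀ u v, (pathGraph 1).Adj u v → f u ≠ f v} ≃ Fin x := by
      refine ⟨fun f => f.1 0, fun c => ⟨fun _ => c, ?_⟩, fun f => ?_, fun c => rfl⟩
      · intro u v huv
        rw [pathGraph_adj] at huv
        omega
      · exact Subtype.ext (funext fun i => congrArg f.1 (Subsingleton.elim _ _))
    rw [chromaticCount, Nat.card_congr e]
    simp
  | succ n ih =>
    classical
    rw [chromaticCount]
    have e : {f : Fin (n+2) → Fin x // ∀ u v, (pathGraph (n+2)).Adj u v → f u ≠ f v} ≃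
        Σ g : {g : Fin (n+1) → Fin x // ∀ u v, (pathGraph (n+1)).Adj u v → g u ≠ g v},
          {c : Fin x // c ≠ g.1 (Fin.last n)} := by
      refine ⟨fun f => ⟨⟨f.1 ∘ Fin.castSucc, ?_⟩, ⟨f.1 (Fin.last (n+1)), ?_⟩⟩,
        fun p => ⟨Fin.snoc p.1.1 p.2.1, ?_⟩, fun f => ?_, fun p => ?_⟩
      · intro u v huv
        apply f.2
        rw [pathGraph_adj] at huv ⊢
        simpa using huv
      · apply f.2
        rw [pathGraph_adj]
        right
        simp
      · intro u v huv
        rw [pathGraph_adj] at huv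
        rcases huv with h | h
        · -- u.val + 1 = v.val
          rcases Fin.eq_castSucc_or_eq_last v with ⟨j, rfl⟩ | rfl
          · rcases Fin.eq_castSucc_or_eq_last u with ⟨i, rfl⟩ | rfl
            · simp only [Fin.snoc_castSucc]
              apply p.1.2
              rw [pathGraph_adj]
              left
              simpa using h
            · exfalso
              simp [Fin.last] at h
              omega
          · have hu : u = Fin.castSucc (Fin.last n) := by
              rcases Fin.eq_castSucc_or_eq_last u with ⟨i, rfl⟩ | rfl
              · congr 1
                ext
                simp [Fin.last] at h ⊢
                omega
              · simp [Fin.last] at h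
            subst hu
            simp only [Fin.snoc_castSucc, Fin.snoc_last]
            exact fun hh => p.2.2 hh.symm
        · -- v.val + 1 = u.val  (mirror)
          rcases Fin.eq_castSucc_or_eq_last u with ⟨j, rfl⟩ | rfl
          · rcases Fin.eq_castSucc_or_eq_last v with ⟨i, rfl⟩ | rfl
            · simp only [Fin.snoc_castSucc]
              apply p.1.2
              rw [pathGraph_adj]
              right
              simpa using h
            · exfalso
              simp [Fin.last] at h
              omega
          · have hv : v = Fin.castSucc (Fin.last n) := by
              rcases Fin.eq_castSucc_or_eq_last v with ⟨i, rfl⟩ | rfl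
              · congr 1
                ext
                simp [Fin.last] at h ⊢
                omega
              · simp [Fin.last] at h
            subst hv
            simp only [Fin.snoc_castSucc, Fin.snoc_last]
            exact p.2.2
      · exact Subtype.ext (funext fun v => congrFun (Fin.snoc_init_self f.1) v)
      · rcases p with ⟨⟨g, hg⟩, ⟨c, hc⟩⟩
        refine Sigma.ext (Subtype.ext ?_) (Subtype.heq_iff_coe_eq ?_ |>.2 ?_)
        · ext i
          simp [Fin.snoc_castSucc]
        · intro c'
          constructor <;> intro h <;> (try exact h)
          all_goals
            simpa [Fin.snoc_castSucc] using h
        · simp [Fin.snoc_last]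
    rw [Nat.card_congr e, nat_card_sigma]
    have hcard : ∀ g : {g : Fin (n+1) → Fin x // ∀ u v, (pathGraph (n+1)).Adj u v → g u ≠ g v},
        Nat.card {c : Fin x // c ≠ g.1 (Fin.last n)} = x - 1 := by
      intro g
      rw [Nat.card_eq_fintype_card, Fintype.card_subtype_compl, Fintype.card_subtype_eq]
      simp
    simp only [hcard, Finset.sum_const, Finset.card_univ, smul_eq_mul]
    rw [← Nat.card_eq_fintype_card, ← chromaticCount, ih]
    ring



lemma fin_sub_eq_one_iff {m : ℕ} (u v : Fin (m+2)) :
    v - u = 1 ↔ (u.val + 1 = v.val ∨ (u = Fin.last (m+1) ∧ v = 0)) := by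
  rw [sub_eq_iff_eq_add]
  have hv := v.isLt
  have hu := u.isLt
  simp only [Fin.ext_iff, Fin.val_add, Fin.val_one, Fin.val_last, Fin.val_zero]
  by_cases h : u.val = m + 1
  · have h1 : (1 + u.val) % (m+2) = 0 := by
      rw [h, Nat.add_comm]
      simp
    rw [h1]
    omega
  · have h1 : (1 + u.val) % (m+2) = 1 + u.val := Nat.mod_eq_of_lt (by omega)
    rw [h1]
    omega

lemma cycleGraph_adj_char {m : ℕ} (u v : Fin (m+2)) :
    (cycleGraph (m+2)).Adj u v ↔ ((pathGraph (m+2)).Adj u v ∨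
      (u = 0 ∧ v = Fin.last (m+1)) ∨ (u = Fin.last (m+1) ∧ v = 0)) := by
  rw [cycleGraph_adj, pathGraph_adj, fin_sub_eq_one_iff, fin_sub_eq_one_iff]
  tauto

lemma cycle_proper_iff {m x : ℕ} (f : Fin (m+2) → Fin x) :
    (∀ u v, (cycleGraph (m+2)).Adj u v → f u ≠ f v) ↔
      ((∀ u v, (pathGraph (m+2)).Adj u v → f u ≠ f v) ∧ f 0 ≠ f (Fin.last (m+1))) := by
  constructor
  · intro h
    refine ⟨fun u v huv => h u v ?_, h 0 (Fin.last (m+1)) ?_⟩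
    · rw [cycleGraph_adj_char]; exact Or.inl huv
    · rw [cycleGraph_adj_char]; exact Or.inr (Or.inl ⟨rfl, rfl⟩)
  · rintro ⟨hP, hQ⟩ u v huv
    rw [cycleGraph_adj_char] at huv
    rcases huv with h | ⟨rfl, rfl⟩ | ⟨rfl, rfl⟩
    · exact hP u v h
    · exact hQ
    · exact hQ.symm

/-- Contraction equivalence. -/
def contractEquiv (m x : ℕ) :
    {f : Fin (m+3) → Fin x //
       (∀ u v, (pathGraph (m+3)).Adj u v → f u ≠ f v) ∧ f 0 = f (Fin.last (m+2))} ≃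
    {g : Fin (m+2) → Fin x // ∀ u v, (cycleGraph (m+2)).Adj u v → g u ≠ g v} where
  toFun f := ⟨f.1 ∘ Fin.castSucc, by
    obtain ⟨f, hP, hQ⟩ := f
    intro u v huv
    rw [cycleGraph_adj_char] at huv
    have hadj : ∀ a b : Fin (m+3), a.val + 1 = b.val → f a ≠ f b := by
      intro a b hab
      apply hP
      rw [pathGraph_adj]
      exact Or.inl hab
    rcases huv with h | ⟨rfl, rfl⟩ | ⟨rfl, rfl⟩
    · rw [pathGraph_adj] at h
      rcases h with h | h
      · exact hadj _ _ (by simpa using h)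
      · exact (hadj _ _ (by simpa using h)).symm
    · -- u = 0, v = last (m+1)
      simp only [Function.comp_apply, Fin.castSucc_zero]
      rw [hQ]
      exact (hadj (Fin.castSucc (Fin.last (m+1))) (Fin.last (m+2)) (by simp [Fin.last])).symm
    · simp only [Function.comp_apply, Fin.castSucc_zero]
      rw [hQ]
      exact hadj (Fin.castSucc (Fin.last (m+1))) (Fin.last (m+2)) (by simp [Fin.last])⟩
  invFun g := ⟨Fin.snoc g.1 (g.1 0), by
    obtain ⟨g, hg⟩ := g
    have hadjc : ∀ a b : Fin (m+2), a.val + 1 = b.val → g a ≠ g b := by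
      intro a b hab
      apply hg
      rw [cycleGraph_adj_char, pathGraph_adj]
      exact Or.inl (Or.inl hab)
    have hlast : g (Fin.last (m+1)) ≠ g 0 := by
      apply hg
      rw [cycleGraph_adj_char]
      exact Or.inr (Or.inr ⟨rfl, rfl⟩)
    constructor
    · have key : ∀ a b : Fin (m+3), a.val + 1 = b.val →
          @Fin.snoc (m+2) (fun _ => Fin x) g (g 0) a ≠ @Fin.snoc (m+2) (fun _ => Fin x) g (g 0) b := by
        intro a b hab
        rcases Fin.eq_castSucc_or_eq_last b with ⟨j, rfl⟩ | rfl
        · rcases Fin.eq_castSucc_or_eq_last a with ⟨i, rfl⟩ | rfl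
          · simp only [Fin.snoc_castSucc]
            exact hadjc i j (by simpa using hab)
          · exfalso
            have := j.isLt
            simp [Fin.last] at hab
            omega
        · have ha : a = Fin.castSucc (Fin.last (m+1)) := by
            rcases Fin.eq_castSucc_or_eq_last a with ⟨i, rfl⟩ | rfl
            · congr 1
              ext
              simp [Fin.last] at hab ⊢
              omega
            · simp [Fin.last] at hab
          subst ha
          simp only [Fin.snoc_castSucc, Fin.snoc_last]
          exact hlast
      intro u v huv
      rw [pathGraph_adj] at huv
      rcases huv with h | h
      · exact key u v h
      · exact (key v u h).symm
    · simp only [Fin.snoc_last]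
      have h0 : (0 : Fin (m+3)) = Fin.castSucc 0 := rfl
      rw [h0, Fin.snoc_castSucc]⟩
  left_inv f := by
    apply Subtype.ext
    have h1 : (f.1 ∘ Fin.castSucc) 0 = f.1 (Fin.last (m+2)) := by
      simpa using f.2.2
    show Fin.snoc (f.1 ∘ Fin.castSucc) ((f.1 ∘ Fin.castSucc) 0) = f.1
    rw [h1]
    exact Fin.snoc_init_self f.1
  right_inv g := by
    apply Subtype.ext
    funext i
    simp [Fin.snoc_castSucc]

lemma nat_card_split {α : Type} [Finite α] (P Q : α → Prop) :
    Nat.card {a // P a ∧ Q a} + Nat.card {a // P a ∧ ¬ Q a} = Nat.card {a // P a} := by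
  classical
  cases nonempty_fintype α
  simp only [Nat.card_eq_fintype_card, Fintype.card_subtype]
  rw [← Finset.card_filter_add_card_filter_not
    (s := Finset.univ.filter P) (p := Q), Finset.filter_filter, Finset.filter_filter]

lemma cycle_del_contract (m x : ℕ) :
    chromaticCount (cycleGraph (m+3)) x + chromaticCount (cycleGraph (m+2)) x
      = chromaticCount (pathGraph (m+3)) x := by
  classical
  have h1 : chromaticCount (cycleGraph (m+3)) x
      = Nat.card {f : Fin (m+3) → Fin x //
          (∀ u v, (pathGraph (m+3)).Adj u v → f u ≠ f v) ∧ f 0 ≠ f (Fin.last (m+2))} :=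
    Nat.card_congr (Equiv.subtypeEquivRight (fun f => cycle_proper_iff f))
  have h2 : chromaticCount (cycleGraph (m+2)) x
      = Nat.card {f : Fin (m+3) → Fin x //
          (∀ u v, (pathGraph (m+3)).Adj u v → f u ≠ f v) ∧ ¬ f 0 ≠ f (Fin.last (m+2))} := by
    refine Nat.card_congr ((contractEquiv m x).symm.trans (Equiv.subtypeEquivRight ?_))
    intro f
    rw [not_ne_iff]
  rw [h1, h2, chromaticCount]
  exact nat_card_split _ _





section Bridge

variable {V : Type} [Fintype V] [DecidableEq V]

lemma parts_eq_image (P : Finpartition (Finset.univ : Finset V)) :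
    P.parts = Finset.univ.image P.part := by
  apply Finset.Subset.antisymm
  · intro p hp
    obtain ⟨a, -, ha⟩ := P.part_surjOn (by exact_mod_cast hp)
    exact Finset.mem_image.2 ⟨a, Finset.mem_univ a, ha⟩
  · intro p hp
    obtain ⟨a, -, rfl⟩ := Finset.mem_image.1 hp
    exact P.part_mem.2 (Finset.mem_univ a)

lemma part_ext {P Q : Finpartition (Finset.univ : Finset V)}
    (h : ∀ a, P.part a = Q.part a) : P = Q := by
  apply Finpartition.ext
  rw [parts_eq_image P, parts_eq_image Q]
  apply Finset.image_congr
  intro a _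
  exact h a

/-- witness of a part -/
noncomputable def wit (P : Finpartition (Finset.univ : Finset V)) {p : Finset V}
    (hp : p ∈ P.parts) : V := (P.nonempty_of_mem_parts hp).choose

lemma wit_mem (P : Finpartition (Finset.univ : Finset V)) {p : Finset V}
    (hp : p ∈ P.parts) : wit P hp ∈ p := (P.nonempty_of_mem_parts hp).choose_spec

lemma part_wit (P : Finpartition (Finset.univ : Finset V)) {p : Finset V}
    (hp : p ∈ P.parts) : P.part (wit P hp) = p := P.part_eq_of_mem hp (wit_mem P hp)

noncomputable instance kerDec {x : ℕ} (g : V → Fin x) : DecidableRel (Setoid.ker g).r :=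
  fun a b => decidable_of_iff (g a = g b) Iff.rfl

/-- the fiber partition of a coloring -/
noncomputable def fiberPartition {x : ℕ} (g : V → Fin x) : Finpartition (Finset.univ : Finset V) :=
  Finpartition.ofSetoid (Setoid.ker g)

lemma mem_fiberPart {x : ℕ} (g : V → Fin x) (a b : V) :
    b ∈ (fiberPartition g).part a ↔ g a = g b :=
  Finpartition.mem_part_ofSetoid_iff_rel

variable (G : SimpleGraph V)

/-- assemble a coloring from a partition and an injection of parts into colors -/
noncomputable def assemble (x : ℕ)
    (q : Σ P : {P : Finpartition (Finset.univ : Finset V) //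
          ∀ p ∈ P.parts, ∀ u ∈ p, ∀ v ∈ p, ¬ G.Adj u v},
        ({p : Finset V // p ∈ P.1.parts} ↪ Fin x)) :
    {f : V → Fin x // ∀ u v, G.Adj u v → f u ≠ f v} := by
  refine ⟨fun v => q.2 ⟨q.1.1.part v, q.1.1.part_mem.2 (Finset.mem_univ v)⟩, ?_⟩
  intro u v huv he
  have hpq : q.1.1.part u = q.1.1.part v := by
    have := q.2.injective he
    exact Subtype.ext_iff.1 this
  apply q.1.2 (q.1.1.part u) (q.1.1.part_mem.2 (Finset.mem_univ u))
    u (q.1.1.mem_part (Finset.mem_univ u)) v (hpq ▸ q.1.1.mem_part (Finset.mem_univ v)) huv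

lemma assemble_bijective (x : ℕ) : Function.Bijective (assemble G x) := by
  constructor
  · rintro ⟨⟨P, hP⟩, ι⟩ ⟨⟨Q, hQ⟩, κ⟩ h
    have hfg : ∀ v : V, (ι ⟨P.part v, P.part_mem.2 (Finset.mem_univ v)⟩ : Fin x)
        = κ ⟨Q.part v, Q.part_mem.2 (Finset.mem_univ v)⟩ := by
      intro v
      exact congrFun (congrArg Subtype.val h) v
    have hpart : ∀ v, P.part v = Q.part v := by
      intro v
      ext b
      have h1 : b ∈ P.part v ↔ P.part b = P.part v :=
        P.mem_part_iff_part_eq_part (Finset.mem_univ b) (Finset.mem_univ v)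
      have h2 : b ∈ Q.part v ↔ Q.part b = Q.part v :=
        Q.mem_part_iff_part_eq_part (Finset.mem_univ b) (Finset.mem_univ v)
      rw [h1, h2]
      constructor
      · intro hb
        have hk : (κ ⟨Q.part b, Q.part_mem.2 (Finset.mem_univ b)⟩ : Fin x)
            = κ ⟨Q.part v, Q.part_mem.2 (Finset.mem_univ v)⟩ := by
          rw [← hfg b, ← hfg v]
          exact congrArg (fun a => ι a) (Subtype.ext hb)
        exact congrArg Subtype.val (κ.injective hk)
      · intro hb
        have hk : (ι ⟨P.part b, P.part_mem.2 (Finset.mem_univ b)⟩ : Fin x)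
            = ι ⟨P.part v, P.part_mem.2 (Finset.mem_univ v)⟩ := by
          rw [hfg b, hfg v]
          exact congrArg (fun a => κ a) (Subtype.ext hb)
        exact congrArg Subtype.val (ι.injective hk)
    have hPQ : P = Q := part_ext hpart
    subst hPQ
    have : ι = κ := by
      apply DFunLike.ext
      rintro ⟨p, hp⟩
      have h1 : P.part (wit P hp) = p := part_wit P hp
      have := hfg (wit P hp)
      calc ι ⟨p, hp⟩ = ι ⟨P.part (wit P hp), P.part_mem.2 (Finset.mem_univ _)⟩ := by
            congr 1
            exact Subtype.ext h1.symm
        _ = κ ⟨P.part (wit P hp), P.part_mem.2 (Finset.mem_univ _)⟩ := this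
        _ = κ ⟨p, hp⟩ := by
            congr 1
            exact Subtype.ext h1
    rw [this]
  · rintro ⟨f, hf⟩
    have hind : ∀ p ∈ (fiberPartition f).parts, ∀ u ∈ p, ∀ v ∈ p, ¬ G.Adj u v := by
      intro p hp u hu v hv hadj
      have h1 : (fiberPartition f).part u = p :=
        (fiberPartition f).part_eq_of_mem hp hu
      have h2 : f u = f v := by
        rw [← mem_fiberPart f u v, h1]
        exact hv
      exact hf u v hadj h2
    have hinj : Function.Injective (fun p : {p : Finset V // p ∈ (fiberPartition f).parts} =>
        f (wit (fiberPartition f) p.2)) := by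
      rintro ⟨p, hp⟩ ⟨q, hq⟩ h
      have h1 : wit (fiberPartition f) hq ∈ (fiberPartition f).part (wit (fiberPartition f) hp) := by
        rw [mem_fiberPart]
        exact h
      have h2 := ((fiberPartition f).mem_part_iff_part_eq_part
        (Finset.mem_univ (wit (fiberPartition f) hq)) (Finset.mem_univ (wit (fiberPartition f) hp))).1 h1
      apply Subtype.ext
      calc p = (fiberPartition f).part (wit (fiberPartition f) hp) := (part_wit _ hp).symm
        _ = (fiberPartition f).part (wit (fiberPartition f) hq) := h2.symm
        _ = q := part_wit _ hq
    refine ⟨⟨⟨fiberPartition f, hind⟩, ⟨_, hinj⟩⟩, ?_⟩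
    apply Subtype.ext
    funext v
    show f (wit (fiberPartition f) _) = f v
    have : wit (fiberPartition f) ((fiberPartition f).part_mem.2 (Finset.mem_univ v))
        ∈ (fiberPartition f).part v := wit_mem _ _
    rw [mem_fiberPart] at this
    exact this.symm

lemma chromaticCount_eq_sum (x : ℕ) :
    chromaticCount G x
      = ∑ k ∈ range (Fintype.card V + 1), graphStirling G k * x.descFactorial k := by
  classical
  rw [chromaticCount, Nat.card_congr (Equiv.ofBijective (assemble G x) (assemble_bijective G x)).symm]
  rw [nat_card_sigma]
  have hterm : ∀ P : {P : Finpartition (Finset.univ : Finset V) //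
      ∀ p ∈ P.parts, ∀ u ∈ p, ∀ v ∈ p, ¬ G.Adj u v},
      Nat.card ({p : Finset V // p ∈ P.1.parts} ↪ Fin x) = x.descFactorial P.1.parts.card := by
    intro P
    rw [Nat.card_eq_fintype_card, Fintype.card_embedding_eq]
    congr 1
    · simp
    · exact Fintype.card_coe _
  rw [Finset.sum_congr rfl (fun P _ => hterm P)]
  rw [← Finset.sum_fiberwise_of_maps_to (g := fun P : {P : Finpartition (Finset.univ : Finset V) //
      ∀ p ∈ P.parts, ∀ u ∈ p, ∀ v ∈ p, ¬ G.Adj u v} => P.1.parts.card)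
      (t := range (Fintype.card V + 1)) ?_]
  · apply Finset.sum_congr rfl
    intro k _
    have : ∀ P ∈ Finset.univ.filter (fun P : {P : Finpartition (Finset.univ : Finset V) //
        ∀ p ∈ P.parts, ∀ u ∈ p, ∀ v ∈ p, ¬ G.Adj u v} => P.1.parts.card = k),
        x.descFactorial P.1.parts.card = x.descFactorial k := by
      intro P hP
      rw [(Finset.mem_filter.1 hP).2]
    rw [Finset.sum_congr rfl this, Finset.sum_const, smul_eq_mul]
    congr 1
    rw [graphStirling, ← Fintype.card_subtype]
    rw [Nat.card_eq_fintype_card]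
    apply Fintype.card_congr
    exact ((Equiv.subtypeSubtypeEquivSubtypeInter
        (fun P : Finpartition (Finset.univ : Finset V) =>
          ∀ p ∈ P.parts, ∀ u ∈ p, ∀ v ∈ p, ¬ G.Adj u v)
        (fun P => P.parts.card = k)).trans
      (Equiv.subtypeEquivRight (fun P =>
        ⟨fun h => ⟨h.2, h.1⟩, fun h => ⟨h.2, h.1⟩⟩)))
  · intro P _
    have := P.1.card_parts_le_card
    simp only [Finset.card_univ] at this
    exact Finset.mem_range.2 (Nat.lt_succ_of_le this)

end Bridge

section Glue

lemma graphStirling_gt {V : Type} [Fintype V] [DecidableEq V] (G : SimpleGraph V) (k : ℕ)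
    (h : Fintype.card V < k) : graphStirling G k = 0 := by
  rw [graphStirling, Nat.card_eq_zero]
  left
  constructor
  rintro ⟨P, hPk, -⟩
  have := P.card_parts_le_card
  simp only [Finset.card_univ] at this
  omega

lemma chromaticCount_cycle_sum (n x : ℕ) :
    chromaticCount (cycleGraph (n+1)) x
      = ∑ k ∈ range (n+2), graphStirling (cycleGraph (n+1)) k * x.descFactorial k := by
  have := chromaticCount_eq_sum (cycleGraph (n+1)) x
  simpa [Fintype.card_fin] using this

lemma stirling_path_sum (m x : ℕ) :
    ∑ k ∈ range (m+4), stirling2 (m+2) (k-1) * x.descFactorial k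
      = chromaticCount (pathGraph (m+3)) x := by
  rcases x with _ | y
  · rw [chromaticCount_zero]
    apply Finset.sum_eq_zero
    intro k _
    rcases k with _ | j
    · show stirling2 (m+2) 0 * _ = 0
      rw [show stirling2 (m+2) 0 = 0 from rfl]
      ring
    · rw [Nat.zero_descFactorial_succ]
      ring
  · rw [show (m+3) = (m+2)+1 from rfl, chromaticCount_pathGraph]
    rw [Finset.sum_range_succ']
    have h0 : stirling2 (m+2) (0-1) * (y+1).descFactorial 0 = 0 := by
      rw [show stirling2 (m+2) (0-1) = 0 from rfl]
      ring
    rw [h0, add_zero]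
    have h1 : ∀ j ∈ range (m+3), stirling2 (m+2) (j+1-1) * (y+1).descFactorial (j+1)
        = (y+1) * (stirling2 (m+2) j * y.descFactorial j) := by
      intro j _
      rw [Nat.succ_descFactorial_succ, Nat.add_sub_cancel]
      ring
    rw [Finset.sum_congr rfl h1, ← Finset.mul_sum, stirling2_sum]
    simp

lemma keyA (m : ℕ) : ∀ k : ℕ, (graphStirling (cycleGraph (m+3)) k : ℤ)
    = (stirling2 (m+2) (k-1) : ℤ) - (graphStirling (cycleGraph (m+2)) k : ℤ) := by
  have hsum : ∀ x : ℕ, ∑ k ∈ range (m+4),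
      ((graphStirling (cycleGraph (m+3)) k : ℤ) + (graphStirling (cycleGraph (m+2)) k : ℤ)
        - (stirling2 (m+2) (k-1) : ℤ)) * (x.descFactorial k : ℤ) = 0 := by
    intro x
    have e1 : ∑ k ∈ range (m+4), graphStirling (cycleGraph (m+3)) k * x.descFactorial k
        = chromaticCount (cycleGraph (m+3)) x := by
      rw [show m+4 = (m+2)+2 from rfl, show m+3 = (m+2)+1 from rfl,
        ← chromaticCount_cycle_sum]
    have e2 : ∑ k ∈ range (m+4), graphStirling (cycleGraph (m+2)) k * x.descFactorial k
        = chromaticCount (cycleGraph (m+2)) x := by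
      rw [show m+4 = (m+3)+1 from rfl, Finset.sum_range_succ]
      rw [graphStirling_gt _ _ (by simp [Fintype.card_fin])]
      rw [show m+3 = (m+1)+2 from rfl, show m+2 = (m+1)+1 from rfl,
        ← chromaticCount_cycle_sum]
      ring
    have hN : ∑ k ∈ range (m+4), graphStirling (cycleGraph (m+3)) k * x.descFactorial k
        + ∑ k ∈ range (m+4), graphStirling (cycleGraph (m+2)) k * x.descFactorial k
        = ∑ k ∈ range (m+4), stirling2 (m+2) (k-1) * x.descFactorial k := by
      rw [e1, e2, stirling_path_sum m x, cycle_del_contract m x]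
    have hZ := congrArg (fun t : ℕ => (t : ℤ)) hN
    push_cast at hZ
    have expand : ∀ k ∈ range (m+4),
        ((graphStirling (cycleGraph (m+3)) k : ℤ) + (graphStirling (cycleGraph (m+2)) k : ℤ)
          - (stirling2 (m+2) (k-1) : ℤ)) * (x.descFactorial k : ℤ)
        = (graphStirling (cycleGraph (m+3)) k : ℤ) * x.descFactorial k
          + (graphStirling (cycleGraph (m+2)) k : ℤ) * x.descFactorial k
          - (stirling2 (m+2) (k-1) : ℤ) * x.descFactorial k := by
      intro k _
      ring
    rw [Finset.sum_congr rfl expand, Finset.sum_sub_distrib, Finset.sum_add_distrib]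
    rw [sub_eq_zero]
    exact hZ
  have hvan := descFactorial_indep (m+4) _ hsum
  intro k
  rcases lt_or_ge k (m+4) with hk | hk
  · have := hvan k hk
    linarith
  · have h1 : graphStirling (cycleGraph (m+3)) k = 0 :=
      graphStirling_gt _ _ (by simp only [Fintype.card_fin]; omega)
    have h2 : graphStirling (cycleGraph (m+2)) k = 0 :=
      graphStirling_gt _ _ (by simp only [Fintype.card_fin]; omega)
    have h3 : stirling2 (m+2) (k-1) = 0 := stirling2_eq_zero (by omega)
    rw [h1, h2, h3]
    simp

lemma C2_vals : ∀ k : ℕ, graphStirling (cycleGraph 2) k = if k = 2 then 1 else 0 := by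
  have hsum : ∀ x : ℕ, ∑ k ∈ range 3,
      ((graphStirling (cycleGraph 2) k : ℤ) - (if k = 2 then 1 else 0))
        * (x.descFactorial k : ℤ) = 0 := by
    intro x
    have e1 : ∑ k ∈ range 3, graphStirling (cycleGraph 2) k * x.descFactorial k
        = chromaticCount (cycleGraph 2) x := by
      rw [show (2:ℕ) = 1+1 from rfl, ← chromaticCount_cycle_sum]
    have e2 : chromaticCount (cycleGraph 2) x = x.descFactorial 2 := by
      rw [cycleGraph_two_eq_top, ← pathGraph_two_eq_top,
        show (2:ℕ) = 1+1 from rfl, chromaticCount_pathGraph]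
      simp [Nat.descFactorial]
      ring
    have hN : ∑ k ∈ range 3, graphStirling (cycleGraph 2) k * x.descFactorial k
        = x.descFactorial 2 := e1.trans e2
    have hZ := congrArg (fun t : ℕ => (t : ℤ)) hN
    push_cast at hZ
    have expand : ∀ k ∈ range 3,
        ((graphStirling (cycleGraph 2) k : ℤ) - (if k = 2 then 1 else 0))
          * (x.descFactorial k : ℤ)
        = (graphStirling (cycleGraph 2) k : ℤ) * x.descFactorial k
          - (if k = 2 then (1:ℤ) else 0) * x.descFactorial k := by
      intro k _
      ring
    rw [Finset.sum_congr rfl expand, Finset.sum_sub_distrib, sub_eq_zero, hZ]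
    rw [show (3:ℕ) = 2+1 from rfl, Finset.sum_range_succ, Finset.sum_range_succ,
      Finset.sum_range_succ]
    norm_num
  have hvan := descFactorial_indep 3 _ hsum
  intro k
  rcases lt_or_ge k 3 with hk | hk
  · have := hvan k hk
    interval_cases k <;> simp_all <;> omega
  · have h1 : graphStirling (cycleGraph 2) k = 0 :=
      graphStirling_gt _ _ (by simp only [Fintype.card_fin]; omega)
    rw [h1, if_neg (by omega)]

end Glue

theorem cycle_graphStirling_recurrence :
    (∀ n : ℕ, 4 ≤ n → ∀ k : ℕ,
      (graphStirling (SimpleGraph.cycleGraph n) k : ℤ) =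
        (stirling2 (n - 1) (k - 1) : ℤ) - (graphStirling (SimpleGraph.cycleGraph (n - 1)) k : ℤ))
    ∧ graphStirling (SimpleGraph.cycleGraph 3) 3 = 1
    ∧ ∀ k : ℕ, k ≠ 3 → graphStirling (SimpleGraph.cycleGraph 3) k = 0 := by
  have key3 := keyA 0
  have hC2 := C2_vals
  refine ⟨?_, ?_, ?_⟩
  · intro n hn k
    obtain ⟨m, rfl⟩ : ∃ m, n = m + 4 := ⟨n - 4, by omega⟩
    exact keyA (m+1) k
  · have := key3 3
    rw [hC2 3] at this
    norm_num at this
    have h22 : stirling2 2 2 = 1 := by decide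
    rw [h22] at this
    exact_mod_cast this
  · intro k hk
    rcases lt_or_ge k 4 with h4 | h4
    · have := key3 k
      rw [hC2 k] at this
      interval_cases k
      · rw [show stirling2 2 (0-1) = 0 by decide] at this
        norm_num at this
        exact_mod_cast this
      · rw [show stirling2 2 (1-1) = 0 by decide] at this
        norm_num at this
        exact_mod_cast this
      · rw [show stirling2 2 (2-1) = 1 by decide] at this
        norm_num at this
        exact_mod_cast this
      · omega
    · exact graphStirling_gt _ _ (by simp only [Fintype.card_fin]; omega)
end
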